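/- arXiv:1704.05361 — 3 statements merged into one kernel-verified Lean document; each statement's English description precedes it below -/
import Mathlib

section
/- Let P and Q be real symmetric positive definite n×n matrices, let A₀ be a real n×n matrix such that −Q − (P A₀ + A₀ᵀ P) is positive semidefinite (i.e., P A₀ + A₀ᵀ P ≼ −Q), and let Ā₁, …, Ā_{n_θ} be real n×n matrices and θ₁, …, θ_{n_θ} real numbers such that |θⱼ| ≤ θ̄ and ‖Āⱼ‖ ≤ ā for all j, where ‖·‖ is the ℓ²-operator norm. If n_θ · ā · θ̄ ≤ λmin(Q) / (2 λmax(P)), then setting A := A₀ + Σ_{j=1}^{n_θ} θⱼ Āⱼ, the matrix P A + Aᵀ P is negative semidefinite. -/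
open Matrix

set_option synthInstance.maxHeartbeats 1000000
set_option maxHeartbeats 1000000

lemma quad_eq {n : ℕ} {M : Matrix (Fin n) (Fin n) ℝ} (hM : M.IsHermitian) (x : Fin n → ℝ) :
    ∃ y : Fin n → ℝ, x ⬝ᵥ x = ∑ i, y i ^ 2 ∧
      x ⬝ᵥ (M *ᵥ x) = ∑ i, hM.eigenvalues i * y i ^ 2 ∧
      (M *ᵥ x) ⬝ᵥ (M *ᵥ x) = ∑ i, hM.eigenvalues i ^ 2 * y i ^ 2 := by
  set U : Matrix (Fin n) (Fin n) ℝ := (hM.eigenvectorUnitary : Matrix (Fin n) (Fin n) ℝ) with hUdef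
  have hU1 : star U * U = 1 := Unitary.coe_star_mul_self hM.eigenvectorUnitary
  have hU2 : U * star U = 1 := Matrix.mem_unitaryGroup_iff.mp hM.eigenvectorUnitary.2
  set y : Fin n → ℝ := star U *ᵥ x with hy
  have hyv : vecMul x U = y := by
    rw [hy, Matrix.star_eq_conjTranspose, conjTranspose_eq_transpose_of_trivial,
      mulVec_transpose]
  have key : ∀ d : Fin n → ℝ, x ⬝ᵥ ((U * diagonal d * star U) *ᵥ x) = ∑ i, d i * y i ^ 2 := by
    intro d
    rw [← mulVec_mulVec, ← mulVec_mulVec, dotProduct_mulVec, hyv, ← hy]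
    simp only [dotProduct, mulVec_diagonal]
    exact Finset.sum_congr rfl fun i _ => by ring
  have hspec : M = U * diagonal hM.eigenvalues * star U := by
    have := hM.spectral_theorem
    simpa using this
  have hsym : Mᵀ = M := by
    rw [← conjTranspose_eq_transpose_of_trivial]; exact hM
  have hsym' : vecMul x M = M *ᵥ x := by
    nth_rewrite 2 [← hsym]
    exact (mulVec_transpose M x).symm
  refine ⟨y, ?_, ?_, ?_⟩
  · have h1 := key (fun _ => (1:ℝ))
    have hdone : U * diagonal (fun _ => (1:ℝ)) * star U = 1 := by
      have : diagonal (fun _ : Fin n => (1:ℝ)) = 1 := diagonal_one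
      rw [this, mul_one, hU2]
    rw [hdone, one_mulVec] at h1
    simpa using h1
  · have h := key hM.eigenvalues
    rw [← hspec] at h
    exact h
  · have hMM : M * M = U * diagonal (fun i => hM.eigenvalues i ^ 2) * star U := by
      conv_lhs => rw [hspec]
      calc U * diagonal hM.eigenvalues * star U * (U * diagonal hM.eigenvalues * star U)
          = U * (diagonal hM.eigenvalues * (star U * U) * diagonal hM.eigenvalues) * star U := by
            noncomm_ring
        _ = _ := by
            rw [hU1, mul_one, diagonal_mul_diagonal]
            congr 2
            funext i; ring
    have h := key (fun i => hM.eigenvalues i ^ 2)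
    rw [← hMM] at h
    rw [← h, ← mulVec_mulVec]
    conv_rhs => rw [dotProduct_mulVec, hsym']


/-- **Robust stability (Bergsten–Palm argument).**
If `P A₀ + A₀ᵀ P ≼ −Q` with `P, Q` symmetric positive definite, the perturbation
matrices satisfy `‖Āⱼ‖ ≤ ā` (ℓ²-operator norm) and `|θⱼ| ≤ θ̄`, and
`n_θ · ā · θ̄ ≤ λmin(Q) / (2 λmax(P))`, then for `A := A₀ + Σⱼ θⱼ Āⱼ` the matrix
`P A + Aᵀ P` is negative semidefinite. -/
theorem robust_stability {n nθ : ℕ}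
    (P Q : Matrix (Fin n) (Fin n) ℝ)
    (hP : P.IsHermitian) (hQ : Q.IsHermitian)
    (hPpd : P.PosDef) (hQpd : Q.PosDef)
    (A₀ : Matrix (Fin n) (Fin n) ℝ)
    (hA₀ : (-Q - (P * A₀ + A₀ᵀ * P)).PosSemidef)
    (Abar : Fin nθ → Matrix (Fin n) (Fin n) ℝ)
    (θ : Fin nθ → ℝ) (θbar abar : ℝ)
    (hθ : ∀ j, |θ j| ≤ θbar)
    (hA : ∀ j, ‖Matrix.toEuclideanCLM (𝕜 := ℝ) (Abar j)‖ ≤ abar)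
    (hbound : (nθ : ℝ) * abar * θbar ≤
        (⨅ i, hQ.eigenvalues i) / (2 * ⨆ i, hP.eigenvalues i)) :
    (-(P * (A₀ + ∑ j, θ j • Abar j) + (A₀ + ∑ j, θ j • Abar j)ᵀ * P)).PosSemidef := by
  rcases Nat.eq_zero_or_pos n with hn | hn
  · subst hn
    have h0 : (-(P * (A₀ + ∑ j, θ j • Abar j) + (A₀ + ∑ j, θ j • Abar j)ᵀ * P)) = 0 :=
      Subsingleton.elim _ _
    rw [h0]
    exact Matrix.PosSemidef.zero
  haveI : Nonempty (Fin n) := ⟨⟨0, hn⟩⟩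
  set Δ : Matrix (Fin n) (Fin n) ℝ := ∑ j, θ j • Abar j with hΔdef
  set c : ℝ := (nθ : ℝ) * abar * θbar with hc
  set lq : ℝ := ⨅ i, hQ.eigenvalues i with hlq
  set lp : ℝ := ⨆ i, hP.eigenvalues i with hlp
  have hlp_le : ∀ i, hP.eigenvalues i ≤ lp :=
    fun i => le_ciSup (Set.Finite.bddAbove (Set.finite_range _)) i
  have hlq_le : ∀ i, lq ≤ hQ.eigenvalues i :=
    fun i => ciInf_le (Set.Finite.bddBelow (Set.finite_range _)) i
  have hlp_pos : 0 < lp :=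
    lt_of_lt_of_le (hPpd.eigenvalues_pos ⟨0, hn⟩) (hlp_le ⟨0, hn⟩)
  have hbound' : c * (2 * lp) ≤ lq := (le_div_iff₀ (by positivity)).mp hbound
  -- operator norm bound on Δ
  have hΔnorm : ‖Matrix.toEuclideanCLM (𝕜 := ℝ) Δ‖ ≤ c := by
    rw [hΔdef, map_sum]
    calc ‖∑ j, Matrix.toEuclideanCLM (𝕜 := ℝ) (θ j • Abar j)‖
        ≤ ∑ j, ‖Matrix.toEuclideanCLM (𝕜 := ℝ) (θ j • Abar j)‖ := norm_sum_le _ _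
      _ ≤ ∑ _j : Fin nθ, θbar * abar := by
          refine Finset.sum_le_sum fun j _ => ?_
          rw [_root_.map_smul, norm_smul (θ j) (Matrix.toEuclideanCLM (𝕜 := ℝ) (Abar j)),
            Real.norm_eq_abs]
          exact mul_le_mul (hθ j) (hA j) (norm_nonneg _) ((abs_nonneg _).trans (hθ j))
      _ = c := by rw [Finset.sum_const, Finset.card_univ, Fintype.card_fin]; push_cast; ring
  -- symmetry facts
  have hPt : Pᵀ = P := by rw [← conjTranspose_eq_transpose_of_trivial]; exact hP
  rw [posSemidef_iff_dotProduct_mulVec]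
  constructor
  · show _ = _
    rw [conjTranspose_eq_transpose_of_trivial]
    rw [transpose_neg, transpose_add, transpose_mul, transpose_mul, transpose_transpose, hPt]
    rw [add_comm]
  intro x
  rw [star_trivial]
  set t : ℝ := x ⬝ᵥ x with hxt
  have ht : 0 ≤ t := Finset.sum_nonneg fun i _ => mul_self_nonneg _
  -- Euclidean space embedding
  set e : (Fin n → ℝ) → EuclideanSpace ℝ (Fin n) := fun v => (WithLp.equiv 2 _).symm v with he
  have hinner : ∀ v w : Fin n → ℝ, v ⬝ᵥ w = inner ℝ (e v) (e w) := by
    intro v w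
    simp [dotProduct, PiLp.inner_apply, he, mul_comm]
  have hnormsq : ∀ v : Fin n → ℝ, ‖e v‖ ^ 2 = v ⬝ᵥ v := by
    intro v
    rw [hinner, real_inner_self_eq_norm_sq]
  -- bound on ‖e (P *ᵥ x)‖
  have hPxn : ‖e (P *ᵥ x)‖ ≤ lp * ‖e x‖ := by
    have hsq : ‖e (P *ᵥ x)‖ ^ 2 ≤ (lp * ‖e x‖) ^ 2 := by
      obtain ⟨y, h0, _, h2⟩ := quad_eq hP x
      rw [hnormsq, h2, mul_pow, hnormsq, h0, Finset.mul_sum]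
      refine Finset.sum_le_sum fun i _ => ?_
      exact mul_le_mul_of_nonneg_right
        (pow_le_pow_left₀ (hPpd.eigenvalues_pos i).le (hlp_le i) 2) (sq_nonneg _)
    have h1 : ‖e (P *ᵥ x)‖ = Real.sqrt (‖e (P *ᵥ x)‖ ^ 2) := (Real.sqrt_sq (norm_nonneg _)).symm
    rw [h1]
    calc Real.sqrt (‖e (P *ᵥ x)‖ ^ 2) ≤ Real.sqrt ((lp * ‖e x‖) ^ 2) := Real.sqrt_le_sqrt hsq
      _ = lp * ‖e x‖ := Real.sqrt_sq (by positivity)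
  -- bound on ‖e (Δ *ᵥ x)‖
  have hΔxn : ‖e (Δ *ᵥ x)‖ ≤ c * ‖e x‖ := by
    have : e (Δ *ᵥ x) = Matrix.toEuclideanCLM (𝕜 := ℝ) Δ (e x) :=
      (Matrix.toEuclideanCLM_toLp Δ x).symm
    rw [this]
    calc ‖Matrix.toEuclideanCLM (𝕜 := ℝ) Δ (e x)‖
        ≤ ‖Matrix.toEuclideanCLM (𝕜 := ℝ) Δ‖ * ‖e x‖ := ContinuousLinearMap.le_opNorm _ _
      _ ≤ c * ‖e x‖ := mul_le_mul_of_nonneg_right hΔnorm (norm_nonneg _)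
  -- cross term bound
  have key2 : (P *ᵥ x) ⬝ᵥ (Δ *ᵥ x) ≤ lp * c * t := by
    calc (P *ᵥ x) ⬝ᵥ (Δ *ᵥ x) = inner ℝ (e (P *ᵥ x)) (e (Δ *ᵥ x)) := hinner _ _
      _ ≤ ‖e (P *ᵥ x)‖ * ‖e (Δ *ᵥ x)‖ := real_inner_le_norm _ _
      _ ≤ (lp * ‖e x‖) * (c * ‖e x‖) :=
          mul_le_mul hPxn hΔxn (norm_nonneg _) (by positivity)
      _ = lp * c * ‖e x‖ ^ 2 := by ring
      _ = lp * c * t := by rw [hnormsq]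
  -- lower bound on Q quadratic form
  have hQx : lq * t ≤ x ⬝ᵥ (Q *ᵥ x) := by
    obtain ⟨y, h0, h1, _⟩ := quad_eq hQ x
    rw [hxt, h0, h1, Finset.mul_sum]
    exact Finset.sum_le_sum fun i _ => mul_le_mul_of_nonneg_right (hlq_le i) (sq_nonneg _)
  -- A₀ part
  have hA₀x : x ⬝ᵥ ((P * A₀ + A₀ᵀ * P) *ᵥ x) ≤ -(x ⬝ᵥ (Q *ᵥ x)) := by
    have h0 := hA₀.dotProduct_mulVec_nonneg x
    rw [star_trivial, sub_mulVec, neg_mulVec, dotProduct_sub, dotProduct_neg] at h0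
    linarith
  -- expand the quadratic form
  have hPvec : vecMul x P = P *ᵥ x := by
    nth_rewrite 2 [← hPt]; exact (mulVec_transpose P x).symm
  have tPD : x ⬝ᵥ ((P * Δ) *ᵥ x) = (P *ᵥ x) ⬝ᵥ (Δ *ᵥ x) := by
    rw [← mulVec_mulVec, dotProduct_mulVec, hPvec]
  have tDP : x ⬝ᵥ ((Δᵀ * P) *ᵥ x) = (P *ᵥ x) ⬝ᵥ (Δ *ᵥ x) := by
    rw [← mulVec_mulVec, dotProduct_mulVec, vecMul_transpose, dotProduct_comm]
  have expand : x ⬝ᵥ ((P * (A₀ + Δ) + (A₀ + Δ)ᵀ * P) *ᵥ x) =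
      x ⬝ᵥ ((P * A₀ + A₀ᵀ * P) *ᵥ x) + ((P *ᵥ x) ⬝ᵥ (Δ *ᵥ x) + (P *ᵥ x) ⬝ᵥ (Δ *ᵥ x)) := by
    simp only [mul_add, transpose_add, add_mul, add_mulVec, dotProduct_add, tPD, tDP]
    ring
  rw [neg_mulVec, dotProduct_neg, expand]
  nlinarith [mul_le_mul_of_nonneg_right hbound' ht]
end

section
/- Fix matrices A_i, Ā_{ij} (n×n real), B̄_{ij} (n×n_u real), F̄_{ij} ∈ ℝⁿ, L_i (n×m real), C (m×n real), a real symmetric n×n matrix P, constants θ_j ∈ ℝ, ρ_j > 0, and functions μ_i : ℝ → ℝ, x̂ : ℝ → ℝⁿ, u : ℝ → ℝ^{n_u}. Define φ_{ij}(t) := Ā_{ij} x̂(t) + B̄_{ij} u(t) + F̄_{ij}. Suppose eₓ : ℝ → ℝⁿ and e_{θ_j} : ℝ → ℝ are functions such that at a time t: (i) eₓ has derivative Σᵢ μᵢ(t)[(Aᵢ − LᵢC + Σⱼ θⱼ Ā_{ij}) eₓ(t) + Σⱼ e_{θ_j}(t) φ_{ij}(t)] at t, and (ii) each e_{θ_j}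 has derivative −(1/ρ_j) Σᵢ μᵢ(t) φ_{ij}(t)ᵀ P eₓ(t) at t. Then the function V(s) := eₓ(s)ᵀ P eₓ(s) + Σⱼ ρ_j e_{θ_j}(s)² has derivative at t equal to Σᵢ μᵢ(t) · eₓ(t)ᵀ [P(Aᵢ − LᵢC + Σⱼ θⱼ Ā_{ij}) + (Aᵢ − LᵢC + Σⱼ θⱼ Ā_{ij})ᵀ P] eₓ(t). -/
open Matrix

private lemma sum_dotProduct' {ι : Type*} {n : ℕ} (s : Finset ι) (f : ι → Fin n → ℝ)
    (w : Fin n → ℝ) : (∑ i ∈ s, f i) ⬝ᵥ w = ∑ i ∈ s, f i ⬝ᵥ w := by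
  simp only [dotProduct, Finset.sum_apply, Finset.sum_mul]
  exact Finset.sum_comm

/-- **The parameter update law (14) annihilates the cross terms in `V̇`.**
With `φ_{ij}(t) := Ā_{ij} x̂(t) + B̄_{ij} u(t) + F̄_{ij}`, if at time `t` the state
error satisfies `ėₓ = Σᵢ μᵢ[(Aᵢ − LᵢC + Σⱼ θⱼ Ā_{ij}) eₓ + Σⱼ e_{θⱼ} φ_{ij}]` and
each parameter error satisfies `ė_{θⱼ} = −(1/ρⱼ) Σᵢ μᵢ φ_{ij}ᵀ P eₓ`, then
`V(s) := eₓ(s)ᵀ P eₓ(s) + Σⱼ ρⱼ e_{θⱼ}(s)²` has derivative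
`Σᵢ μᵢ eₓᵀ [P(Aᵢ − LᵢC + Σⱼ θⱼ Ā_{ij}) + (Aᵢ − LᵢC + Σⱼ θⱼ Ā_{ij})ᵀ P] eₓ` at `t`. -/
theorem lyapunov_derivative {n nu m r nθ : ℕ}
    (A : Fin r → Matrix (Fin n) (Fin n) ℝ)
    (Abar : Fin r → Fin nθ → Matrix (Fin n) (Fin n) ℝ)
    (Bbar : Fin r → Fin nθ → Matrix (Fin n) (Fin nu) ℝ)
    (Fbar : Fin r → Fin nθ → Fin n → ℝ)
    (L : Fin r → Matrix (Fin n) (Fin m) ℝ)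
    (C : Matrix (Fin m) (Fin n) ℝ)
    (P : Matrix (Fin n) (Fin n) ℝ) (hP : P.IsSymm)
    (θ : Fin nθ → ℝ) (ρ : Fin nθ → ℝ) (hρ : ∀ j, 0 < ρ j)
    (μ : Fin r → ℝ → ℝ) (xhat : ℝ → Fin n → ℝ) (u : ℝ → Fin nu → ℝ)
    (φ : Fin r → Fin nθ → ℝ → Fin n → ℝ)
    (hφ : ∀ i j t, φ i j t = (Abar i j).mulVec (xhat t)
        + (Bbar i j).mulVec (u t) + Fbar i j)
    (ex : ℝ → Fin n → ℝ) (eθ : Fin nθ → ℝ → ℝ) (t : ℝ)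
    (hex : HasDerivAt ex
      (∑ i, μ i t • ((A i - L i * C + ∑ j, θ j • Abar i j).mulVec (ex t)
        + ∑ j, eθ j t • φ i j t)) t)
    (heθ : ∀ j, HasDerivAt (eθ j)
      (-(1 / ρ j) * ∑ i, μ i t * (φ i j t ⬝ᵥ P.mulVec (ex t))) t) :
    HasDerivAt (fun s => ex s ⬝ᵥ P.mulVec (ex s) + ∑ j, ρ j * (eθ j s) ^ 2)
      (∑ i, μ i t * (ex t ⬝ᵥ
        ((P * (A i - L i * C + ∑ j, θ j • Abar i j)
          + (A i - L i * C + ∑ j, θ j • Abar i j)ᵀ * P).mulVec (ex t)))) t := by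
  classical
  set M : Fin r → Matrix (Fin n) (Fin n) ℝ :=
    fun i => A i - L i * C + ∑ j, θ j • Abar i j with hMdef
  set D : Fin n → ℝ :=
    ∑ i, μ i t • ((M i).mulVec (ex t) + ∑ j, eθ j t • φ i j t) with hDdef
  set w : Fin n → ℝ := P.mulVec (ex t) with hwdef
  have hsym : ∀ v : Fin n → ℝ, ex t ⬝ᵥ P.mulVec v = v ⬝ᵥ w := by
    intro v
    conv_lhs => rw [dotProduct_mulVec, ← hP.eq, vecMul_transpose, dotProduct_comm]
  have hcomp : ∀ a, HasDerivAt (fun s => ex s a) (D a) t := hasDerivAt_pi.mp hex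
  -- derivative of the quadratic part
  have h1 : HasDerivAt (fun s => ex s ⬝ᵥ P.mulVec (ex s))
      (D ⬝ᵥ w + ex t ⬝ᵥ P.mulVec D) t := by
    have hrw : ∀ s, ex s ⬝ᵥ P.mulVec (ex s) = ∑ a, ∑ b, ex s a * (P a b * ex s b) := by
      intro s; simp [dotProduct, Matrix.mulVec, Finset.mul_sum]
    have h2 : HasDerivAt (fun s => ∑ a, ∑ b, ex s a * (P a b * ex s b))
        (∑ a, ∑ b, (D a * (P a b * ex t b) + ex t a * (P a b * D b))) t := by
      apply HasDerivAt.fun_sum; intro a _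
      apply HasDerivAt.fun_sum; intro b _
      exact (hcomp a).mul ((hcomp b).const_mul (P a b))
    simp only [hrw]
    convert h2 using 1
    simp [hwdef, dotProduct, Matrix.mulVec, Finset.mul_sum, Finset.sum_add_distrib]
  -- derivative of the parameter part
  have h3 : HasDerivAt (fun s => ∑ j, ρ j * (eθ j s) ^ 2)
      (∑ j, ρ j * (2 * eθ j t *
        (-(1 / ρ j) * ∑ i, μ i t * (φ i j t ⬝ᵥ w)))) t := by
    apply HasDerivAt.fun_sum; intro j _
    have := ((heθ j).pow 2).const_mul (ρ j)
    simpa [mul_comm, mul_assoc, mul_left_comm] using this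
  have h4 := h1.add h3
  refine h4.congr_deriv ?_
  -- the algebraic identity
  have hq : ∀ i, ex t ⬝ᵥ (P * M i + (M i)ᵀ * P).mulVec (ex t)
      = 2 * ((M i).mulVec (ex t) ⬝ᵥ w) := by
    intro i
    have h2nd : ex t ⬝ᵥ (M i)ᵀ.mulVec w = (M i).mulVec (ex t) ⬝ᵥ w := by
      rw [dotProduct_mulVec, vecMul_transpose]
    rw [add_mulVec, dotProduct_add, ← mulVec_mulVec, ← mulVec_mulVec, ← hwdef,
      hsym ((M i).mulVec (ex t)), h2nd]
    ring
  have hDw : D ⬝ᵥ w = ∑ i, μ i t * ((M i).mulVec (ex t) ⬝ᵥ w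
      + ∑ j, eθ j t * (φ i j t ⬝ᵥ w)) := by
    rw [hDdef, sum_dotProduct']
    refine Finset.sum_congr rfl fun i _ => ?_
    rw [smul_dotProduct, add_dotProduct, sum_dotProduct']
    simp [smul_eq_mul]
  have hswap : ∑ j, eθ j t * ∑ i, μ i t * (φ i j t ⬝ᵥ w)
      = ∑ i, μ i t * ∑ j, eθ j t * (φ i j t ⬝ᵥ w) := by
    simp only [Finset.mul_sum]
    rw [Finset.sum_comm]
    exact Finset.sum_congr rfl fun i _ => Finset.sum_congr rfl fun j _ => by ring
  have hR3 : (∑ j, ρ j * (2 * eθ j t * (-(1 / ρ j) * ∑ i, μ i t * (φ i j t ⬝ᵥ w))))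
      = -(2 * ∑ i, μ i t * ∑ j, eθ j t * (φ i j t ⬝ᵥ w)) := by
    calc ∑ j, ρ j * (2 * eθ j t * (-(1 / ρ j) * ∑ i, μ i t * (φ i j t ⬝ᵥ w)))
        = ∑ j, -(2 * (eθ j t * ∑ i, μ i t * (φ i j t ⬝ᵥ w))) := by
          refine Finset.sum_congr rfl fun j _ => ?_
          have hρj : ρ j ≠ 0 := (hρ j).ne'
          field_simp
      _ = -(2 * ∑ j, eθ j t * ∑ i, μ i t * (φ i j t ⬝ᵥ w)) := by
          simp [Finset.mul_sum]
      _ = -(2 * ∑ i, μ i t * ∑ j, eθ j t * (φ i j t ⬝ᵥ w)) := by rw [hswap]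
  have hL : ∑ i, μ i t * (ex t ⬝ᵥ (P * M i + (M i)ᵀ * P).mulVec (ex t))
      = 2 * ∑ i, μ i t * ((M i).mulVec (ex t) ⬝ᵥ w) := by
    rw [Finset.mul_sum]
    exact Finset.sum_congr rfl fun i _ => by rw [hq i]; ring
  have hsplit : ∑ i, μ i t * ((M i).mulVec (ex t) ⬝ᵥ w + ∑ j, eθ j t * (φ i j t ⬝ᵥ w))
      = ∑ i, μ i t * ((M i).mulVec (ex t) ⬝ᵥ w)
        + ∑ i, μ i t * ∑ j, eθ j t * (φ i j t ⬝ᵥ w) := by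
    rw [← Finset.sum_add_distrib]
    exact Finset.sum_congr rfl fun i _ => by ring
  rw [hL, hsym D, hDw, hR3, hsplit]
  ring
end

section
/- Fix matrices A_i, Ā_{ij} (n×n real), B̄_{ij} (n×n_u real), F̄_{ij} ∈ ℝⁿ, L_i (n×m real), C (m×n real), real symmetric positive definite n×n matrices P and Q, constants θ_j ∈ ℝ, ρ_j > 0, θ̄ ≥ 0, ā ≥ 0, and functions μ_i : ℝ → ℝ, x̂ : ℝ → ℝⁿ, u : ℝ → ℝ^{n_u}. Define φ_{ij}(t) := Ā_{ij} x̂(t) + B̄_{ij} u(t) + F̄_{ij}. Assume: (a) for every i, −Q − (P(Aᵢ − LᵢC) + (Aᵢ − LᵢC)ᵀP) is positive semidefinite; (b) |θ_j| ≤ θ̄ and ‖Ā_{ij}‖ ≤ ā (ℓ²-operator norm) for all i, j, and n_θ · ā · θ̄ ≤ λmin(Q)/(2 λmax(P)); (c) μᵢ(t) ≥ 0 for all i and t; (d) eₓ : ℝ → ℝⁿ and e_{θ_j} : ℝ → ℝ are differentiable with, for every t, eₓ′(t) = Σᵢ μᵢ(t)[(Aᵢ − LᵢC + Σⱼ θⱼ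 Ā_{ij}) eₓ(t) + Σⱼ e_{θ_j}(t) φ_{ij}(t)] and e_{θ_j}′(t) = −(1/ρ_j) Σᵢ μᵢ(t) φ_{ij}(t)ᵀ P eₓ(t). Then the function V(t) := eₓ(t)ᵀ P eₓ(t) + Σⱼ ρ_j e_{θ_j}(t)² is nonincreasing on ℝ. -/
open Matrix

section AObsHelpers

variable {n : ℕ}

lemma AObs_dot_eq_inner (x y : Fin n → ℝ) :
    x ⬝ᵥ y = @inner ℝ _ _ ((WithLp.equiv 2 (Fin n → ℝ)).symm x) ((WithLp.equiv 2 (Fin n → ℝ)).symm y) := by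
  simp [PiLp.inner_apply, dotProduct, mul_comm]

lemma AObs_sqrt_dot_eq_norm (a : Fin n → ℝ) :
    Real.sqrt (a ⬝ᵥ a) = ‖(WithLp.equiv 2 (Fin n → ℝ)).symm a‖ := by
  rw [AObs_dot_eq_inner]
  exact (norm_eq_sqrt_real_inner _).symm

lemma AObs_dot_self_nonneg (a : Fin n → ℝ) : 0 ≤ a ⬝ᵥ a := by
  rw [AObs_dot_eq_inner]; exact real_inner_self_nonneg

lemma AObs_abs_dot_cauchy (a b : Fin n → ℝ) :
    |a ⬝ᵥ b| ≤ Real.sqrt (a ⬝ᵥ a) * Real.sqrt (b ⬝ᵥ b) := by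
  rw [AObs_dot_eq_inner, AObs_sqrt_dot_eq_norm, AObs_sqrt_dot_eq_norm]
  exact abs_real_inner_le_norm _ _

lemma AObs_mulVec_opnorm_bound {A : Matrix (Fin n) (Fin n) ℝ} {c : ℝ}
    (h : ‖Matrix.toEuclideanCLM (𝕜 := ℝ) A‖ ≤ c) (x : Fin n → ℝ) :
    Real.sqrt ((A *ᵥ x) ⬝ᵥ (A *ᵥ x)) ≤ c * Real.sqrt (x ⬝ᵥ x) := by
  rw [AObs_sqrt_dot_eq_norm, AObs_sqrt_dot_eq_norm]
  calc ‖(WithLp.equiv 2 (Fin n → ℝ)).symm (A *ᵥ x)‖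
      = ‖Matrix.toEuclideanCLM (𝕜 := ℝ) A ((WithLp.equiv 2 (Fin n → ℝ)).symm x)‖ := by
        rfl
    _ ≤ ‖Matrix.toEuclideanCLM (𝕜 := ℝ) A‖ * ‖(WithLp.equiv 2 (Fin n → ℝ)).symm x‖ :=
        (Matrix.toEuclideanCLM (𝕜 := ℝ) A).le_opNorm _
    _ ≤ c * ‖(WithLp.equiv 2 (Fin n → ℝ)).symm x‖ := by gcongr

lemma AObs_repr_toEuclideanLin {A : Matrix (Fin n) (Fin n) ℝ} (hA : A.IsHermitian)
    (x : EuclideanSpace ℝ (Fin n)) (i : Fin n) :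
    hA.eigenvectorBasis.repr (Matrix.toEuclideanLin A x) i
      = hA.eigenvalues i * hA.eigenvectorBasis.repr x i := by
  have hsym := (Matrix.isHermitian_iff_isSymmetric).1 hA
  rw [OrthonormalBasis.repr_apply_apply, OrthonormalBasis.repr_apply_apply,
    ← hsym (hA.eigenvectorBasis i) x]
  have hb : Matrix.toEuclideanLin A (hA.eigenvectorBasis i)
      = hA.eigenvalues i • hA.eigenvectorBasis i := by
    apply (WithLp.equiv 2 (Fin n → ℝ)).injective
    simp only [WithLp.equiv_apply, Matrix.piLp_ofLp_toEuclideanLin]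
    have := hA.mulVec_eigenvectorBasis i
    simpa using this
  rw [hb, inner_smul_left]
  simp

lemma AObs_quad_eq_sum {A : Matrix (Fin n) (Fin n) ℝ} (hA : A.IsHermitian) (x : Fin n → ℝ) :
    x ⬝ᵥ A *ᵥ x = ∑ i, hA.eigenvalues i *
      (hA.eigenvectorBasis.repr ((WithLp.equiv 2 (Fin n → ℝ)).symm x) i) ^ 2 := by
  set y := (WithLp.equiv 2 (Fin n → ℝ)).symm x with hy
  have h1 : (WithLp.equiv 2 (Fin n → ℝ)).symm (A *ᵥ x) = Matrix.toEuclideanLin A y := by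
    rw [hy]; rfl
  rw [AObs_dot_eq_inner, h1, ← hA.eigenvectorBasis.repr.inner_map_map y (Matrix.toEuclideanLin A y)]
  rw [PiLp.inner_apply]
  refine Finset.sum_congr rfl fun i _ => ?_
  rw [AObs_repr_toEuclideanLin hA y i]
  simp [RCLike.inner_apply]
  ring

lemma AObs_dot_self_eq_sum {A : Matrix (Fin n) (Fin n) ℝ} (hA : A.IsHermitian) (x : Fin n → ℝ) :
    x ⬝ᵥ x = ∑ i, (hA.eigenvectorBasis.repr ((WithLp.equiv 2 (Fin n → ℝ)).symm x) i) ^ 2 := by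
  set y := (WithLp.equiv 2 (Fin n → ℝ)).symm x with hy
  rw [AObs_dot_eq_inner, ← hA.eigenvectorBasis.repr.inner_map_map y y, PiLp.inner_apply]
  refine Finset.sum_congr rfl fun i _ => ?_
  simp [RCLike.inner_apply]

lemma AObs_quad_lower {Q : Matrix (Fin n) (Fin n) ℝ} (hQ : Q.IsHermitian) (x : Fin n → ℝ) :
    (⨅ i, hQ.eigenvalues i) * (x ⬝ᵥ x) ≤ x ⬝ᵥ Q *ᵥ x := by
  rcases isEmpty_or_nonempty (Fin n) with he | hne
  · simp [dotProduct, Finset.univ_eq_empty]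
  · rw [AObs_quad_eq_sum hQ x, AObs_dot_self_eq_sum hQ x, Finset.mul_sum]
    refine Finset.sum_le_sum fun i _ => ?_
    exact mul_le_mul_of_nonneg_right (ciInf_le (Set.Finite.bddBelow (Set.finite_range _)) i)
      (sq_nonneg _)

lemma AObs_mulVec_self_upper {P : Matrix (Fin n) (Fin n) ℝ} (hP : P.IsHermitian) (hpd : P.PosDef)
    (x : Fin n → ℝ) :
    Real.sqrt ((P *ᵥ x) ⬝ᵥ (P *ᵥ x)) ≤ (⨆ i, hP.eigenvalues i) * Real.sqrt (x ⬝ᵥ x) := by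
  rcases isEmpty_or_nonempty (Fin n) with he | hne
  · simp [dotProduct, Finset.univ_eq_empty, Real.iSup_of_isEmpty]
  · have hM : ∀ i, hP.eigenvalues i ≤ ⨆ i, hP.eigenvalues i :=
      fun i => le_ciSup (Set.Finite.bddAbove (Set.finite_range _)) i
    have hMnn : 0 ≤ ⨆ i, hP.eigenvalues i :=
      le_trans (hpd.eigenvalues_pos (Classical.arbitrary _)).le (hM _)
    have hkey : (P *ᵥ x) ⬝ᵥ (P *ᵥ x) ≤ ((⨆ i, hP.eigenvalues i) * Real.sqrt (x ⬝ᵥ x)) ^ 2 := by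
      have h1 : (P *ᵥ x) ⬝ᵥ (P *ᵥ x)
          = ∑ i, (hP.eigenvalues i *
              hP.eigenvectorBasis.repr ((WithLp.equiv 2 (Fin n → ℝ)).symm x) i) ^ 2 := by
        rw [AObs_dot_self_eq_sum hP (P *ᵥ x)]
        refine Finset.sum_congr rfl fun i _ => ?_
        congr 1
        have h2 : (WithLp.equiv 2 (Fin n → ℝ)).symm (P *ᵥ x)
            = Matrix.toEuclideanLin P ((WithLp.equiv 2 (Fin n → ℝ)).symm x) := by
          rfl
        rw [h2, AObs_repr_toEuclideanLin hP]
      rw [h1, mul_pow, Real.sq_sqrt (AObs_dot_self_nonneg x),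
        AObs_dot_self_eq_sum hP x, Finset.mul_sum]
      refine Finset.sum_le_sum fun i _ => ?_
      rw [mul_pow]
      refine mul_le_mul_of_nonneg_right ?_ (sq_nonneg _)
      exact pow_le_pow_left₀ (hpd.eigenvalues_pos i).le (hM i) 2
    calc Real.sqrt ((P *ᵥ x) ⬝ᵥ (P *ᵥ x)) ≤
        Real.sqrt (((⨆ i, hP.eigenvalues i) * Real.sqrt (x ⬝ᵥ x)) ^ 2) :=
          Real.sqrt_le_sqrt hkey
      _ = (⨆ i, hP.eigenvalues i) * Real.sqrt (x ⬝ᵥ x) := by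
          rw [Real.sqrt_sq (by positivity)]

lemma AObs_hasDerivAt_dot_mulVec (P : Matrix (Fin n) (Fin n) ℝ) {f g : ℝ → Fin n → ℝ}
    {f' g' : Fin n → ℝ} {t : ℝ} (hf : HasDerivAt f f' t) (hg : HasDerivAt g g' t) :
    HasDerivAt (fun s => f s ⬝ᵥ P *ᵥ g s) (f' ⬝ᵥ P *ᵥ g t + f t ⬝ᵥ P *ᵥ g') t := by
  have hfi := hasDerivAt_pi.1 hf
  have hgi := hasDerivAt_pi.1 hg
  have H : HasDerivAt (fun s => ∑ i, f s i * ∑ k, P i k * g s k)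
      (∑ i, (f' i * ∑ k, P i k * g t k + f t i * ∑ k, P i k * g' k)) t :=
    HasDerivAt.fun_sum fun i _ =>
      (hfi i).mul (HasDerivAt.fun_sum fun k _ => (hgi k).const_mul (P i k))
  have hfun : (fun s => f s ⬝ᵥ P *ᵥ g s) = fun s => ∑ i, f s i * ∑ k, P i k * g s k := by
    funext s; simp [dotProduct, mulVec]
  rw [hfun]
  convert H using 1
  simp [dotProduct, mulVec, Finset.sum_add_distrib]

lemma AObs_dot_mulVec_symm {P : Matrix (Fin n) (Fin n) ℝ} (hP : P.IsHermitian)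
    (a b : Fin n → ℝ) : a ⬝ᵥ P *ᵥ b = b ⬝ᵥ P *ᵥ a := by
  have hPt : Pᵀ = P := by rw [← Matrix.conjTranspose_eq_transpose_of_trivial]; exact hP
  rw [Matrix.dotProduct_mulVec, ← Matrix.mulVec_transpose, hPt, dotProduct_comm]

lemma AObs_dot_transpose_mul {N P : Matrix (Fin n) (Fin n) ℝ} (x : Fin n → ℝ) :
    x ⬝ᵥ (Nᵀ * P) *ᵥ x = (N *ᵥ x) ⬝ᵥ (P *ᵥ x) := by
  rw [← Matrix.mulVec_mulVec, Matrix.dotProduct_mulVec, ← Matrix.mulVec_transpose,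
    Matrix.transpose_transpose]

lemma AObs_dot_mul_mulVec {P N : Matrix (Fin n) (Fin n) ℝ} (hP : P.IsHermitian) (x : Fin n → ℝ) :
    x ⬝ᵥ (P * N) *ᵥ x = (N *ᵥ x) ⬝ᵥ (P *ᵥ x) := by
  rw [← Matrix.mulVec_mulVec, AObs_dot_mulVec_symm hP]

lemma AObs_sum_dotProduct {ι : Type*} (s : Finset ι) (f : ι → Fin n → ℝ) (w : Fin n → ℝ) :
    (∑ i ∈ s, f i) ⬝ᵥ w = ∑ i ∈ s, f i ⬝ᵥ w := by
  simp only [dotProduct, Finset.sum_apply, Finset.sum_mul]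
  rw [Finset.sum_comm]

lemma AObs_dotProduct_sum {ι : Type*} (s : Finset ι) (w : Fin n → ℝ) (f : ι → Fin n → ℝ) :
    w ⬝ᵥ (∑ i ∈ s, f i) = ∑ i ∈ s, w ⬝ᵥ f i := by
  simp only [dotProduct, Finset.sum_apply, Finset.mul_sum]
  rw [Finset.sum_comm]

lemma AObs_mulVec_finset_sum {ι : Type*} (s : Finset ι) (P : Matrix (Fin n) (Fin n) ℝ)
    (f : ι → Fin n → ℝ) : P *ᵥ (∑ i ∈ s, f i) = ∑ i ∈ s, P *ᵥ f i := by
  funext k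
  simp only [mulVec, Finset.sum_apply]
  rw [AObs_dotProduct_sum]

end AObsHelpers

lemma AObs_finset_sum_mulVec {n : ℕ} {ι : Type*} (s : Finset ι)
    (Ms : ι → Matrix (Fin n) (Fin n) ℝ) (x : Fin n → ℝ) :
    (∑ i ∈ s, Ms i) *ᵥ x = ∑ i ∈ s, Ms i *ᵥ x := by
  funext k
  simp only [mulVec, dotProduct, Matrix.sum_apply, Finset.sum_apply, Finset.sum_mul]
  rw [Finset.sum_comm]


/-- **Lyapunov monotonicity for the adaptive observer.** Under the design
conditions (a) `P(Aᵢ − LᵢC) + (Aᵢ − LᵢC)ᵀP ≼ −Q`, (b) the parameter and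
perturbation bounds with `n_θ ā θ̄ ≤ λmin(Q)/(2 λmax(P))`, (c) nonnegative
weighting functions, and (d) the joint error dynamics with the parameter update
law (14), the function `V(t) = eₓ(t)ᵀ P eₓ(t) + Σⱼ ρⱼ e_{θⱼ}(t)²` is
nonincreasing on `ℝ`. -/
theorem lyapunov_nonincreasing {n nu m r nθ : ℕ}
    (A : Fin r → Matrix (Fin n) (Fin n) ℝ)
    (Abar : Fin r → Fin nθ → Matrix (Fin n) (Fin n) ℝ)
    (Bbar : Fin r → Fin nθ → Matrix (Fin n) (Fin nu) ℝ)
    (Fbar : Fin r → Fin nθ → Fin n → ℝ)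
    (L : Fin r → Matrix (Fin n) (Fin m) ℝ)
    (C : Matrix (Fin m) (Fin n) ℝ)
    (P Q : Matrix (Fin n) (Fin n) ℝ)
    (hP : P.IsHermitian) (hQ : Q.IsHermitian)
    (hPpd : P.PosDef) (hQpd : Q.PosDef)
    (θ : Fin nθ → ℝ) (ρ : Fin nθ → ℝ) (hρ : ∀ j, 0 < ρ j)
    (θbar abar : ℝ)
    (μ : Fin r → ℝ → ℝ) (xhat : ℝ → Fin n → ℝ) (u : ℝ → Fin nu → ℝ)
    (φ : Fin r → Fin nθ → ℝ → Fin n → ℝ)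
    (hφ : ∀ i j t, φ i j t = (Abar i j).mulVec (xhat t)
        + (Bbar i j).mulVec (u t) + Fbar i j)
    -- (a) the LMI stability condition for each submodel
    (ha : ∀ i, (-Q - (P * (A i - L i * C) + (A i - L i * C)ᵀ * P)).PosSemidef)
    -- (b) parameter and perturbation bounds
    (hθ : ∀ j, |θ j| ≤ θbar)
    (hAbar : ∀ i j, ‖Matrix.toEuclideanCLM (𝕜 := ℝ) (Abar i j)‖ ≤ abar)
    (hbound : (nθ : ℝ) * abar * θbar ≤
        (⨅ i, hQ.eigenvalues i) / (2 * ⨆ i, hP.eigenvalues i))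
    -- (c) nonnegative weighting functions
    (hμ : ∀ i t, 0 ≤ μ i t)
    -- (d) the joint error dynamics
    (ex : ℝ → Fin n → ℝ) (eθ : Fin nθ → ℝ → ℝ)
    (hex : ∀ t, HasDerivAt ex
      (∑ i, μ i t • ((A i - L i * C + ∑ j, θ j • Abar i j).mulVec (ex t)
        + ∑ j, eθ j t • φ i j t)) t)
    (heθ : ∀ j t, HasDerivAt (eθ j)
      (-(1 / ρ j) * ∑ i, μ i t * (φ i j t ⬝ᵥ P.mulVec (ex t))) t) :
    Antitone (fun t => ex t ⬝ᵥ P.mulVec (ex t) + ∑ j, ρ j * (eθ j t) ^ 2) := by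
  -- notation
  set Mm : Fin r → Matrix (Fin n) (Fin n) ℝ :=
    fun i => A i - L i * C + ∑ j, θ j • Abar i j with hMm
  set v : ℝ → Fin n → ℝ :=
    fun t => ∑ i, μ i t • ((Mm i) *ᵥ ex t + ∑ j, eθ j t • φ i j t) with hv
  set D : ℝ → ℝ := fun t =>
    (v t ⬝ᵥ P *ᵥ ex t + ex t ⬝ᵥ P *ᵥ v t)
    + ∑ j, ρ j * (2 * eθ j t * (-(1 / ρ j) * ∑ i, μ i t * (φ i j t ⬝ᵥ P *ᵥ ex t))) with hDdef
  have hVd : ∀ t, HasDerivAt (fun s => ex s ⬝ᵥ P.mulVec (ex s) + ∑ j, ρ j * (eθ j s) ^ 2)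
      (D t) t := by
    intro t
    refine HasDerivAt.add (AObs_hasDerivAt_dot_mulVec P (hex t) (hex t))
      (HasDerivAt.fun_sum fun j _ => ?_)
    have h := ((heθ j t).pow 2).const_mul (ρ j)
    simpa [mul_assoc] using h
  -- the key nonpositivity of the derivative
  have hD0 : ∀ t, D t ≤ 0 := by
    intro t
    set x := ex t with hx
    set T : Fin r → Fin nθ → ℝ := fun i j => φ i j t ⬝ᵥ P *ᵥ x with hT
    set S : Fin nθ → ℝ := fun j => ∑ i, μ i t * T i j with hS
    -- expand v ⬝ᵥ P *ᵥ x
    have hv1 : v t ⬝ᵥ P *ᵥ x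
        = ∑ i, μ i t * ((Mm i *ᵥ x) ⬝ᵥ (P *ᵥ x))
          + ∑ i, ∑ j, μ i t * (eθ j t * T i j) := by
      rw [hv]
      rw [AObs_sum_dotProduct]
      rw [← Finset.sum_add_distrib]
      refine Finset.sum_congr rfl fun i _ => ?_
      rw [smul_dotProduct, add_dotProduct, AObs_sum_dotProduct]
      simp only [smul_dotProduct, smul_eq_mul, mul_add, Finset.mul_sum, hT]
      rfl
    have hsymm : x ⬝ᵥ P *ᵥ v t = v t ⬝ᵥ P *ᵥ x := AObs_dot_mulVec_symm hP _ _
    have hcross : ∑ i, ∑ j, μ i t * (eθ j t * T i j) = ∑ j, eθ j t * S j := by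
      rw [Finset.sum_comm]
      refine Finset.sum_congr rfl fun j _ => ?_
      rw [hS, Finset.mul_sum]
      exact Finset.sum_congr rfl fun i _ => by ring
    have hrho : ∀ j, ρ j * (2 * eθ j t * (-(1 / ρ j) * S j)) = -2 * (eθ j t * S j) := by
      intro j
      have := (hρ j).ne'
      field_simp
    have hDeq : D t = 2 * ∑ i, μ i t * ((Mm i *ᵥ x) ⬝ᵥ (P *ᵥ x)) := by
      rw [hDdef]
      simp only
      rw [hsymm, hv1, hcross]
      have : ∑ j, ρ j * (2 * eθ j t * (-(1 / ρ j) * S j)) = ∑ j, -2 * (eθ j t * S j) :=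
        Finset.sum_congr rfl fun j _ => hrho j
      rw [hS] at this
      rw [this]
      rw [← Finset.mul_sum]
      ring
    -- per-submodel nonpositivity
    have hterm : ∀ i, (Mm i *ᵥ x) ⬝ᵥ (P *ᵥ x) ≤ 0 := by
      intro i
      rcases isEmpty_or_nonempty (Fin n) with he | hne
      · simp [dotProduct, Finset.univ_eq_empty]
      · -- split M into the nominal and perturbation parts
        have hsplit : Mm i *ᵥ x = (A i - L i * C) *ᵥ x + ∑ j, θ j • (Abar i j *ᵥ x) := by
          rw [hMm]
          simp only
          rw [Matrix.add_mulVec, AObs_finset_sum_mulVec]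
          congr 1
          exact Finset.sum_congr rfl fun j _ => Matrix.smul_mulVec _ _ _
        rw [hsplit, add_dotProduct, AObs_sum_dotProduct]
        simp only [smul_dotProduct, smul_eq_mul]
        -- nominal part
        have hN : ((A i - L i * C) *ᵥ x) ⬝ᵥ (P *ᵥ x) ≤ -(x ⬝ᵥ Q *ᵥ x) / 2 := by
          have h0 := (ha i).dotProduct_mulVec_nonneg x
          simp only [star_trivial] at h0
          rw [Matrix.sub_mulVec, Matrix.neg_mulVec, Matrix.add_mulVec,
            dotProduct_sub, dotProduct_neg, dotProduct_add,
            AObs_dot_mul_mulVec hP, AObs_dot_transpose_mul] at h0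
          linarith
        -- eigenvalue quantities
        have hlamP : 0 < ⨆ k, hP.eigenvalues k :=
          lt_of_lt_of_le (hPpd.eigenvalues_pos (Classical.arbitrary _))
            (le_ciSup (Set.Finite.bddAbove (Set.finite_range _)) _)
        have hxx : 0 ≤ x ⬝ᵥ x := AObs_dot_self_nonneg x
        have hs : Real.sqrt (x ⬝ᵥ x) * Real.sqrt (x ⬝ᵥ x) = x ⬝ᵥ x :=
          Real.mul_self_sqrt hxx
        -- perturbation part, per parameter
        have hAb : ∀ j, θ j * ((Abar i j *ᵥ x) ⬝ᵥ (P *ᵥ x))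
            ≤ θbar * abar * (⨆ k, hP.eigenvalues k) * (x ⬝ᵥ x) := by
          intro j
          have hθbar : (0:ℝ) ≤ θbar := le_trans (abs_nonneg _) (hθ j)
          have habar : (0:ℝ) ≤ abar := le_trans (norm_nonneg _) (hAbar i j)
          have hC := AObs_abs_dot_cauchy (Abar i j *ᵥ x) (P *ᵥ x)
          have h1 := AObs_mulVec_opnorm_bound (hAbar i j) x
          have h2 := AObs_mulVec_self_upper hP hPpd x
          have hsq1 : (0:ℝ) ≤ Real.sqrt ((Abar i j *ᵥ x) ⬝ᵥ (Abar i j *ᵥ x)) := Real.sqrt_nonneg _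
          have hsq2 : (0:ℝ) ≤ Real.sqrt ((P *ᵥ x) ⬝ᵥ (P *ᵥ x)) := Real.sqrt_nonneg _
          have hsq3 : (0:ℝ) ≤ Real.sqrt (x ⬝ᵥ x) := Real.sqrt_nonneg _
          calc θ j * ((Abar i j *ᵥ x) ⬝ᵥ (P *ᵥ x))
              ≤ |θ j * ((Abar i j *ᵥ x) ⬝ᵥ (P *ᵥ x))| := le_abs_self _
            _ = |θ j| * |(Abar i j *ᵥ x) ⬝ᵥ (P *ᵥ x)| := abs_mul _ _
            _ ≤ θbar * (Real.sqrt ((Abar i j *ᵥ x) ⬝ᵥ (Abar i j *ᵥ x))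
                  * Real.sqrt ((P *ᵥ x) ⬝ᵥ (P *ᵥ x))) :=
                mul_le_mul (hθ j) hC (abs_nonneg _) hθbar
            _ ≤ θbar * ((abar * Real.sqrt (x ⬝ᵥ x))
                  * ((⨆ k, hP.eigenvalues k) * Real.sqrt (x ⬝ᵥ x))) := by
                refine mul_le_mul_of_nonneg_left ?_ hθbar
                exact mul_le_mul h1 h2 hsq2 (by positivity)
            _ = θbar * abar * (⨆ k, hP.eigenvalues k)
                  * (Real.sqrt (x ⬝ᵥ x) * Real.sqrt (x ⬝ᵥ x)) := by ring
            _ = θbar * abar * (⨆ k, hP.eigenvalues k) * (x ⬝ᵥ x) := by rw [hs]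
        have hsum : ∑ j, θ j * ((Abar i j *ᵥ x) ⬝ᵥ (P *ᵥ x))
            ≤ (nθ : ℝ) * (θbar * abar * (⨆ k, hP.eigenvalues k) * (x ⬝ᵥ x)) := by
          calc ∑ j, θ j * ((Abar i j *ᵥ x) ⬝ᵥ (P *ᵥ x))
              ≤ ∑ _j : Fin nθ, θbar * abar * (⨆ k, hP.eigenvalues k) * (x ⬝ᵥ x) :=
                Finset.sum_le_sum fun j _ => hAb j
            _ = (nθ : ℝ) * (θbar * abar * (⨆ k, hP.eigenvalues k) * (x ⬝ᵥ x)) := by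
                simp [Finset.sum_const, Finset.card_univ, mul_comm]
        have hQx : (⨅ k, hQ.eigenvalues k) * (x ⬝ᵥ x) ≤ x ⬝ᵥ Q *ᵥ x := AObs_quad_lower hQ x
        have hb2 : ((nθ : ℝ) * abar * θbar) * (2 * ⨆ k, hP.eigenvalues k)
            ≤ ⨅ k, hQ.eigenvalues k :=
          (le_div_iff₀ (by positivity)).1 hbound
        have hb3 : ((nθ : ℝ) * abar * θbar) * (2 * ⨆ k, hP.eigenvalues k) * (x ⬝ᵥ x)
            ≤ (⨅ k, hQ.eigenvalues k) * (x ⬝ᵥ x) :=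
          mul_le_mul_of_nonneg_right hb2 hxx
        nlinarith [hN, hsum, hQx, hb3]
    rw [hDeq]
    have hsum0 : ∑ i, μ i t * ((Mm i *ᵥ x) ⬝ᵥ (P *ᵥ x)) ≤ 0 :=
      Finset.sum_nonpos fun i _ => mul_nonpos_iff.2 (Or.inl ⟨hμ i t, hterm i⟩)
    linarith
  -- conclude
  refine antitone_of_deriv_nonpos (fun t => (hVd t).differentiableAt) fun t => ?_
  rw [(hVd t).deriv]
  exact hD0 t
end
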